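/- arXiv:2302.13744 — 2 statements merged into one kernel-verified Lean document; each statement's English description precedes it below -/
import Mathlib

section
/- Let p be a prime number and let P → Q → R → S be a sequence of homomorphisms of abelian groups that is exact at Q and at R. Suppose each of P, Q, R, S is a p-primary torsion abelian group of finite p-rank. Then |r_p(Q) − r_p(R)| ≤ 2·r_p(P) + r_p(S). -/
/-- The `p`-torsion subgroup `G[p] = {x : G | p • x = 0}` of an abelian group `G`. -/
def pTorsion (p : ℕ) (G : Type*) [AddCommGroup G] : AddSubgroup G where
  carrier := {x | p • x = 0}
  zero_mem' := smul_zero p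
  add_mem' := by
    intro a b ha hb
    simp only [Set.mem_setOf_eq, smul_add] at *
    rw [ha, hb, add_zero]
  neg_mem' := by
    intro a ha
    simp only [Set.mem_setOf_eq, smul_neg] at *
    rw [ha, neg_zero]

/-- The `p`-rank of an abelian group `G`: the dimension of `G[p]` as an
`𝔽_p = ZMod p` vector space. -/
noncomputable def pRank (p : ℕ) (G : Type*) [AddCommGroup G] : ℕ :=
  letI : Module (ZMod p) (pTorsion p G) :=
    AddCommGroup.zmodModule (fun x => Subtype.ext (by simp; exact x.2))
  Module.finrank (ZMod p) (pTorsion p G)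

section Aux

variable {p : ℕ}

lemma mem_pTorsion {G : Type*} [AddCommGroup G] {x : G} :
    x ∈ pTorsion p G ↔ p • x = 0 := Iff.rfl

/-- Multiplication by `n` as an additive homomorphism. -/
def smulHom (n : ℕ) (G : Type*) [AddCommGroup G] : G →+ G where
  toFun x := n • x
  map_zero' := smul_zero n
  map_add' a b := smul_add n a b

@[simp] lemma smulHom_apply {n : ℕ} {G : Type*} [AddCommGroup G] (x : G) :
    smulHom n G x = n • x := rfl

/-- First isomorphism + Lagrange counting. -/
lemma card_eq_card_ker_mul_card_range {A B : Type*} [AddCommGroup A] [AddCommGroup B]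
    (φ : A →+ B) [Finite A] :
    Nat.card A = Nat.card φ.ker * Nat.card φ.range := by
  rw [AddSubgroup.card_eq_card_quotient_mul_card_addSubgroup φ.ker, mul_comm,
    Nat.card_congr (QuotientAddGroup.quotientKerEquivRange φ).toEquiv]

/-- The `p`-torsion of a subgroup injects into the `p`-torsion of the group. -/
lemma card_pTorsion_subgroup_le {G : Type*} [AddCommGroup G] (H : AddSubgroup G)
    (hfin : Finite (pTorsion p G)) :
    Finite (pTorsion p ↥H) ∧ Nat.card (pTorsion p ↥H) ≤ Nat.card (pTorsion p G) := by
  have hmem : ∀ x : pTorsion p ↥H, ((x : ↥H) : G) ∈ pTorsion p G := by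
    intro x
    have hx : p • (x : ↥H) = 0 := x.2
    show p • ((x : ↥H) : G) = 0
    calc p • ((x : ↥H) : G) = ((p • (x : ↥H) : ↥H) : G) := rfl
      _ = 0 := by rw [hx]; rfl
  have hinj : Function.Injective
      (fun x : pTorsion p ↥H => (⟨(x : ↥H), hmem x⟩ : pTorsion p G)) := by
    intro a b hab
    simp only [Subtype.mk.injEq] at hab
    exact Subtype.ext (Subtype.ext hab)
  exact ⟨Finite.of_injective _ hinj, Nat.card_le_card_of_injective _ hinj⟩

lemma torsion_subgroup {G : Type*} [AddCommGroup G]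
    (htors : ∀ x : G, ∃ k : ℕ, p ^ k • x = 0) (H : AddSubgroup G) :
    ∀ x : ↥H, ∃ k : ℕ, p ^ k • x = 0 := by
  intro x
  obtain ⟨k, hk⟩ := htors (x : G)
  exact ⟨k, Subtype.ext (by simpa using hk)⟩

/-- Key Lemma: for a `p`-primary torsion group with finite `p`-torsion,
`G/pG` is finite with `|G/pG| ≤ |G[p]|`. -/
lemma card_quot_le_card_pTorsion {G : Type*} [AddCommGroup G] (hp : p.Prime)
    (htors : ∀ x : G, ∃ k : ℕ, p ^ k • x = 0)
    (hfin : Finite (pTorsion p G)) :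
    Finite (G ⧸ (smulHom p G).range) ∧
      Nat.card (G ⧸ (smulHom p G).range) ≤ Nat.card (pTorsion p G) := by
  set N := (smulHom p G).range with hN
  have key : ∀ s : Finset (G ⧸ N), s.card ≤ Nat.card (pTorsion p G) := by
    intro s
    classical
    set t : Finset G := s.image Quotient.out with ht
    set M : AddSubgroup G := AddSubgroup.closure (t : Set G) with hM
    haveI : AddGroup.FG ↥M := AddGroup.closure_finset_fg t
    have htorsM : AddMonoid.IsTorsion ↥M := by
      intro x
      obtain ⟨k, hk⟩ := htors (x : G)
      refine isOfFinAddOrder_iff_nsmul_eq_zero.mpr ⟨p ^ k, pow_pos hp.pos k, ?_⟩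
      exact Subtype.ext (by simpa using hk)
    haveI : Finite ↥M := AddCommGroup.finite_of_fg_torsion ↥M htorsM
    set ψ : ↥M →+ G ⧸ N := (QuotientAddGroup.mk' N).comp M.subtype with hψ
    set φM : ↥M →+ ↥M := smulHom p ↥M with hφM
    have hker : φM.range ≤ ψ.ker := by
      rintro _ ⟨m, rfl⟩
      show QuotientAddGroup.mk' N ((p • m : ↥M) : G) = 0
      rw [QuotientAddGroup.mk'_apply, QuotientAddGroup.eq_zero_iff]
      exact ⟨(m : G), rfl⟩
    have hcount1 : Nat.card ↥M = Nat.card ψ.ker * Nat.card ψ.range :=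
      card_eq_card_ker_mul_card_range ψ
    have hcount2 : Nat.card ↥M = Nat.card φM.ker * Nat.card φM.range :=
      card_eq_card_ker_mul_card_range φM
    have h1 : Nat.card φM.range ≤ Nat.card ψ.ker := AddSubgroup.card_le_of_le hker
    have hkerpos : 0 < Nat.card ψ.ker := Nat.card_pos
    have h2 : Nat.card ψ.range ≤ Nat.card φM.ker := by
      have := hcount1 ▸ hcount2
      nlinarith [Nat.card_pos (α := ψ.ker), Nat.card_pos (α := φM.range)]
    have h3 : Nat.card φM.ker ≤ Nat.card (pTorsion p G) := by
      have hmem : ∀ x : φM.ker, ((x : ↥M) : G) ∈ pTorsion p G := by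
        intro x
        have hx : p • (x : ↥M) = 0 := x.2
        show p • ((x : ↥M) : G) = 0
        calc p • ((x : ↥M) : G) = ((p • (x : ↥M) : ↥M) : G) := rfl
          _ = 0 := by rw [hx]; rfl
      have hinj : Function.Injective
          (fun x : φM.ker => (⟨((x : ↥M) : G), hmem x⟩ : pTorsion p G)) := by
        intro a b hab
        simp only [Subtype.mk.injEq] at hab
        exact Subtype.ext (Subtype.ext hab)
      exact Nat.card_le_card_of_injective _ hinj
    have h4 : s.card ≤ Nat.card ψ.range := by
      have hsub : (s : Set (G ⧸ N)) ⊆ (ψ.range : Set (G ⧸ N)) := by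
        intro x hx
        refine ⟨⟨x.out, AddSubgroup.subset_closure ?_⟩, QuotientAddGroup.out_eq' x⟩
        exact Finset.mem_image_of_mem _ hx
      calc s.card = (s : Set (G ⧸ N)).ncard := (Set.ncard_coe_finset s).symm
        _ ≤ (ψ.range : Set (G ⧸ N)).ncard := by
            haveI : Finite ↥ψ.range :=
              Finite.of_surjective ψ.rangeRestrict ψ.rangeRestrict_surjective
            exact Set.ncard_le_ncard hsub (Set.toFinite _)
        _ = Nat.card ψ.range := (Nat.card_coe_set_eq _).symm
    omega
  have hfinquot : Finite (G ⧸ N) := by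
    by_contra hcon
    haveI : Infinite (G ⧸ N) := not_finite_iff_infinite.mp hcon
    obtain ⟨s, hs⟩ := Infinite.exists_subset_card_eq (G ⧸ N) (Nat.card (pTorsion p G) + 1)
    have := key s
    omega
  refine ⟨hfinquot, ?_⟩
  haveI := Fintype.ofFinite (G ⧸ N)
  rw [Nat.card_eq_fintype_card, ← Finset.card_univ]
  exact key Finset.univ

/-- Quotients mod `p` are functorial along surjections. -/
lemma card_quot_le_of_surjective {A B : Type*} [AddCommGroup A] [AddCommGroup B]
    (π : A →+ B) (hπ : Function.Surjective π)
    (hfin : Finite (A ⧸ (smulHom p A).range)) :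
    Finite (B ⧸ (smulHom p B).range) ∧
      Nat.card (B ⧸ (smulHom p B).range) ≤ Nat.card (A ⧸ (smulHom p A).range) := by
  set ρ : A →+ B ⧸ (smulHom p B).range :=
    (QuotientAddGroup.mk' (smulHom p B).range).comp π with hρ
  have hker : (smulHom p A).range ≤ ρ.ker := by
    rintro _ ⟨a, rfl⟩
    show QuotientAddGroup.mk' _ (π (p • a)) = 0
    rw [QuotientAddGroup.mk'_apply, QuotientAddGroup.eq_zero_iff]
    exact ⟨π a, by simp⟩
  set lift := QuotientAddGroup.lift (smulHom p A).range ρ hker with hlift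
  have hsurj : Function.Surjective lift := by
    intro b
    obtain ⟨b', rfl⟩ := QuotientAddGroup.mk'_surjective (smulHom p B).range b
    obtain ⟨a, rfl⟩ := hπ b'
    exact ⟨QuotientAddGroup.mk a, rfl⟩
  exact ⟨Finite.of_surjective lift hsurj, Nat.card_le_card_of_surjective lift hsurj⟩

/-- Six-term / connecting-map bound: the `p`-torsion of the image of `f` is bounded by
`|P[p]| * |ker f / p ker f|`. -/
lemma card_pTorsion_inter_range_le {P Q : Type*} [AddCommGroup P] [AddCommGroup Q]
    (f : P →+ Q)
    (hfinP : Finite (pTorsion p P)) (hfinQ : Finite (pTorsion p Q))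
    (hfinK : Finite (↥f.ker ⧸ (smulHom p ↥f.ker).range)) :
    Nat.card ↥(pTorsion p Q ⊓ f.range) ≤
      Nat.card (pTorsion p P) * Nat.card (↥f.ker ⧸ (smulHom p ↥f.ker).range) := by
  classical
  set T : AddSubgroup Q := pTorsion p Q ⊓ f.range with hT
  set NK : AddSubgroup ↥f.ker := (smulHom p ↥f.ker).range with hNK
  haveI hTfin : Finite ↥T :=
    Finite.of_injective (AddSubgroup.inclusion (inf_le_left : T ≤ pTorsion p Q))
      (AddSubgroup.inclusion_injective _)
  have htor : ∀ x : ↥T, p • (x : Q) = 0 := fun x => (AddSubgroup.mem_inf.mp x.2).1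
  have hrng : ∀ x : ↥T, ∃ y : P, f y = (x : Q) := fun x =>
    AddMonoidHom.mem_range.mp (AddSubgroup.mem_inf.mp x.2).2
  have hkmem : ∀ (y : P), f y ∈ pTorsion p Q → p • y ∈ f.ker := by
    intro y hy
    rw [AddMonoidHom.mem_ker, map_nsmul]
    exact hy
  -- the connecting map
  set yof : ↥T → P := fun x => (hrng x).choose with hyofdef
  have hyof : ∀ x : ↥T, f (yof x) = (x : Q) := fun x => (hrng x).choose_spec
  have hmemyof : ∀ x : ↥T, p • yof x ∈ f.ker := fun x =>
    hkmem _ (by rw [hyof]; exact htor x)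
  set δfun : ↥T → ↥f.ker ⧸ NK := fun x =>
    QuotientAddGroup.mk ⟨p • yof x, hmemyof x⟩ with hδfun
  have wd : ∀ (x : ↥T) (y : P) (hy : f y = (x : Q)) (hmem : p • y ∈ f.ker),
      δfun x = QuotientAddGroup.mk ⟨p • y, hmem⟩ := by
    intro x y hy hmem
    rw [hδfun]
    rw [QuotientAddGroup.eq]
    refine ⟨⟨y - yof x, ?_⟩, ?_⟩
    · rw [AddMonoidHom.mem_ker, map_sub, hy, hyof, sub_self]
    · apply Subtype.ext
      show p • (y - yof x) = -(p • yof x) + p • y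
      rw [smul_sub, sub_eq_neg_add]
  have δadd : ∀ a b : ↥T, δfun (a + b) = δfun a + δfun b := by
    intro a b
    have h1 : f (yof a + yof b) = ((a + b : ↥T) : Q) := by
      rw [map_add, hyof, hyof]; rfl
    have h2 : p • (yof a + yof b) ∈ f.ker :=
      hkmem _ (by rw [h1]; exact htor (a + b))
    rw [wd (a + b) (yof a + yof b) h1 h2]
    have : (⟨p • (yof a + yof b), h2⟩ : ↥f.ker) =
        ⟨p • yof a, hmemyof a⟩ + ⟨p • yof b, hmemyof b⟩ :=
      Subtype.ext (smul_add p _ _)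
    rw [this]
    rfl
  set δ : ↥T →+ ↥f.ker ⧸ NK := AddMonoidHom.mk' δfun δadd with hδ
  -- the restriction of f to p-torsion
  have hfmem : ∀ z : pTorsion p P, f (z : P) ∈ T := by
    intro z
    refine AddSubgroup.mem_inf.mpr ⟨?_, ⟨(z : P), rfl⟩⟩
    rw [mem_pTorsion, ← map_nsmul]
    have : p • (z : P) = 0 := z.2
    rw [this, map_zero]
  set fbar : pTorsion p P →+ ↥T :=
    AddMonoidHom.codRestrict (f.comp (pTorsion p P).subtype) T hfmem with hfbar
  have hkerle : δ.ker ≤ fbar.range := by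
    intro x hx
    have hx' : δfun x = 0 := hx
    rw [hδfun, QuotientAddGroup.eq_zero_iff] at hx'
    obtain ⟨k, hk⟩ := hx'
    have hk' : p • ((k : ↥f.ker) : P) = p • yof x := by
      have := congrArg Subtype.val hk
      simpa using this
    have hz : p • (yof x - (k : ↥f.ker)) = 0 := by
      rw [smul_sub, hk', sub_self]
    refine ⟨⟨yof x - ((k : ↥f.ker) : P), hz⟩, ?_⟩
    apply Subtype.ext
    show f (yof x - ((k : ↥f.ker) : P)) = (x : Q)
    rw [map_sub, hyof, (k : ↥f.ker).2, sub_zero]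
  have hcount : Nat.card ↥T = Nat.card δ.ker * Nat.card δ.range :=
    card_eq_card_ker_mul_card_range δ
  have h1 : Nat.card δ.ker ≤ Nat.card fbar.range := AddSubgroup.card_le_of_le hkerle
  have h2 : Nat.card fbar.range ≤ Nat.card (pTorsion p P) :=
    Nat.card_le_card_of_surjective fbar.rangeRestrict fbar.rangeRestrict_surjective
  have h3 : Nat.card δ.range ≤ Nat.card (↥f.ker ⧸ NK) :=
    Nat.card_le_card_of_injective _ Subtype.coe_injective
  calc Nat.card ↥T = Nat.card δ.ker * Nat.card δ.range := hcount
    _ ≤ Nat.card (pTorsion p P) * Nat.card (↥f.ker ⧸ NK) :=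
        Nat.mul_le_mul (h1.trans h2) h3

/-- `|G[p]| = p ^ r_p(G)`. -/
lemma card_pTorsion_eq_pow {G : Type*} [AddCommGroup G] (hp : p.Prime)
    (hfin : Finite (pTorsion p G)) :
    Nat.card (pTorsion p G) = p ^ pRank p G := by
  haveI := Fact.mk hp
  haveI : NeZero p := ⟨hp.ne_zero⟩
  letI : Module (ZMod p) (pTorsion p G) :=
    AddCommGroup.zmodModule (fun x => Subtype.ext (by simp; exact x.2))
  have hr : pRank p G = Module.finrank (ZMod p) (pTorsion p G) := rfl
  haveI : Fintype (pTorsion p G) := Fintype.ofFinite _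
  rw [hr, Nat.card_eq_fintype_card, Module.card_eq_pow_finrank (K := ZMod p), ZMod.card]

end Aux

/-- Lim–Murty, Lemma 3.2.  If `P → Q → R → S` is a sequence of
homomorphisms of abelian groups, exact at `Q` and at `R`, all four groups being
`p`-primary torsion of finite `p`-rank, then `|r_p(Q) − r_p(R)| ≤ 2 r_p(P) + r_p(S)`. -/
theorem pRank_sub_pRank_le_of_exact
    (p : ℕ) (hp : p.Prime)
    (P Q R S : Type*) [AddCommGroup P] [AddCommGroup Q] [AddCommGroup R] [AddCommGroup S]
    (hPtors : ∀ x : P, ∃ k : ℕ, p ^ k • x = 0)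
    (hQtors : ∀ x : Q, ∃ k : ℕ, p ^ k • x = 0)
    (hRtors : ∀ x : R, ∃ k : ℕ, p ^ k • x = 0)
    (hStors : ∀ x : S, ∃ k : ℕ, p ^ k • x = 0)
    (hPfin : Finite (pTorsion p P)) (hQfin : Finite (pTorsion p Q))
    (hRfin : Finite (pTorsion p R)) (hSfin : Finite (pTorsion p S))
    (f : P →+ Q) (g : Q →+ R) (h : R →+ S)
    (hexQ : f.range = g.ker) (hexR : g.range = h.ker) :
    |(pRank p Q : ℤ) - (pRank p R : ℤ)| ≤ 2 * (pRank p P : ℤ) + (pRank p S : ℤ) := by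
  classical
  haveI := hPfin; haveI := hQfin; haveI := hRfin; haveI := hSfin
  -- restrictions of g and h to p-torsion
  have hgmem : ∀ x : pTorsion p Q, g (x : Q) ∈ pTorsion p R := by
    intro x
    rw [mem_pTorsion, ← map_nsmul]
    have : p • (x : Q) = 0 := x.2
    rw [this, map_zero]
  have hhmem : ∀ x : pTorsion p R, h (x : R) ∈ pTorsion p S := by
    intro x
    rw [mem_pTorsion, ← map_nsmul]
    have : p • (x : R) = 0 := x.2
    rw [this, map_zero]
  set gbar : pTorsion p Q →+ pTorsion p R :=
    AddMonoidHom.codRestrict (g.comp (pTorsion p Q).subtype) _ hgmem with hgbar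
  set hbar : pTorsion p R →+ pTorsion p S :=
    AddMonoidHom.codRestrict (h.comp (pTorsion p R).subtype) _ hhmem with hhbar
  -- identification of kernels with pTorsion ⊓ range
  have ekerg : Nat.card ↥gbar.ker = Nat.card ↥(pTorsion p Q ⊓ f.range) := by
    have mem1 : ∀ x : ↥gbar.ker, ((x : pTorsion p Q) : Q) ∈ pTorsion p Q ⊓ f.range := by
      intro x
      refine AddSubgroup.mem_inf.mpr ⟨((x : pTorsion p Q)).2, ?_⟩
      rw [hexQ, AddMonoidHom.mem_ker]
      exact congrArg Subtype.val x.2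
    have mem2 : ∀ y : ↥(pTorsion p Q ⊓ f.range),
        (⟨(y : Q), (AddSubgroup.mem_inf.mp y.2).1⟩ : pTorsion p Q) ∈ gbar.ker := by
      intro y
      have hy : (y : Q) ∈ g.ker := by
        rw [← hexQ]; exact (AddSubgroup.mem_inf.mp y.2).2
      have hy' : g (y : Q) = 0 := hy
      rw [AddMonoidHom.mem_ker]
      exact Subtype.ext hy'
    exact Nat.card_congr ⟨fun x => ⟨(x : pTorsion p Q), mem1 x⟩,
      fun y => ⟨⟨(y : Q), (AddSubgroup.mem_inf.mp y.2).1⟩, mem2 y⟩,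
      fun x => rfl, fun y => rfl⟩
  have ekerh : Nat.card ↥hbar.ker = Nat.card ↥(pTorsion p R ⊓ g.range) := by
    have mem1 : ∀ x : ↥hbar.ker, ((x : pTorsion p R) : R) ∈ pTorsion p R ⊓ g.range := by
      intro x
      refine AddSubgroup.mem_inf.mpr ⟨((x : pTorsion p R)).2, ?_⟩
      rw [hexR, AddMonoidHom.mem_ker]
      exact congrArg Subtype.val x.2
    have mem2 : ∀ y : ↥(pTorsion p R ⊓ g.range),
        (⟨(y : R), (AddSubgroup.mem_inf.mp y.2).1⟩ : pTorsion p R) ∈ hbar.ker := by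
      intro y
      have hy : (y : R) ∈ h.ker := by
        rw [← hexR]; exact (AddSubgroup.mem_inf.mp y.2).2
      have hy' : h (y : R) = 0 := hy
      rw [AddMonoidHom.mem_ker]
      exact Subtype.ext hy'
    exact Nat.card_congr ⟨fun x => ⟨(x : pTorsion p R), mem1 x⟩,
      fun y => ⟨⟨(y : R), (AddSubgroup.mem_inf.mp y.2).1⟩, mem2 y⟩,
      fun x => rfl, fun y => rfl⟩
  -- quotient bounds
  obtain ⟨hfinKf, hKf⟩ :=
    card_quot_le_card_pTorsion (G := ↥f.ker) hp (torsion_subgroup hPtors f.ker)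
      (card_pTorsion_subgroup_le f.ker hPfin).1
  have hKf2 : Nat.card (pTorsion p ↥f.ker) ≤ Nat.card (pTorsion p P) :=
    (card_pTorsion_subgroup_le f.ker hPfin).2
  obtain ⟨hfinPQ, hPQ⟩ := card_quot_le_card_pTorsion (G := P) hp hPtors hPfin
  -- surjection P → g.ker (using exactness at Q)
  have hfker : ∀ x : P, f x ∈ g.ker := fun x => by
    rw [← hexQ]; exact ⟨x, rfl⟩
  set f' : P →+ ↥g.ker := AddMonoidHom.codRestrict f g.ker hfker with hf'
  have hf'surj : Function.Surjective f' := by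
    intro y
    have : (y : Q) ∈ f.range := by rw [hexQ]; exact y.2
    obtain ⟨x, hx⟩ := this
    exact ⟨x, Subtype.ext hx⟩
  obtain ⟨hfinKg, hKg⟩ := card_quot_le_of_surjective f' hf'surj hfinPQ
  -- Direction 1 : card Q[p] ≤ card P[p]^2 * card R[p]
  have dir1 : Nat.card (pTorsion p Q) ≤
      Nat.card (pTorsion p P) * Nat.card (pTorsion p P) * Nat.card (pTorsion p R) := by
    have hc : Nat.card (pTorsion p Q) = Nat.card gbar.ker * Nat.card gbar.range :=
      card_eq_card_ker_mul_card_range gbar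
    have h1 : Nat.card gbar.range ≤ Nat.card (pTorsion p R) :=
      Nat.card_le_card_of_injective _ Subtype.coe_injective
    have h2 : Nat.card ↥gbar.ker ≤ Nat.card (pTorsion p P) * Nat.card (pTorsion p P) := by
      rw [ekerg]
      calc Nat.card ↥(pTorsion p Q ⊓ f.range) ≤
          Nat.card (pTorsion p P) * Nat.card (↥f.ker ⧸ (smulHom p ↥f.ker).range) :=
            card_pTorsion_inter_range_le f hPfin hQfin hfinKf
        _ ≤ Nat.card (pTorsion p P) * Nat.card (pTorsion p P) :=
            Nat.mul_le_mul_left _ (hKf.trans hKf2)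
    calc Nat.card (pTorsion p Q) = Nat.card gbar.ker * Nat.card gbar.range := hc
      _ ≤ (Nat.card (pTorsion p P) * Nat.card (pTorsion p P)) * Nat.card (pTorsion p R) :=
          Nat.mul_le_mul h2 h1
  -- Direction 2 : card R[p] ≤ card P[p] * card Q[p] * card S[p]
  have dir2 : Nat.card (pTorsion p R) ≤
      Nat.card (pTorsion p Q) * Nat.card (pTorsion p P) * Nat.card (pTorsion p S) := by
    have hc : Nat.card (pTorsion p R) = Nat.card hbar.ker * Nat.card hbar.range :=
      card_eq_card_ker_mul_card_range hbar
    have h1 : Nat.card hbar.range ≤ Nat.card (pTorsion p S) :=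
      Nat.card_le_card_of_injective _ Subtype.coe_injective
    have h2 : Nat.card ↥hbar.ker ≤ Nat.card (pTorsion p Q) * Nat.card (pTorsion p P) := by
      rw [ekerh]
      calc Nat.card ↥(pTorsion p R ⊓ g.range) ≤
          Nat.card (pTorsion p Q) * Nat.card (↥g.ker ⧸ (smulHom p ↥g.ker).range) :=
            card_pTorsion_inter_range_le g hQfin hRfin hfinKg
        _ ≤ Nat.card (pTorsion p Q) * Nat.card (pTorsion p P) :=
            Nat.mul_le_mul_left _ (hKg.trans hPQ)
    calc Nat.card (pTorsion p R) = Nat.card hbar.ker * Nat.card hbar.range := hc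
      _ ≤ (Nat.card (pTorsion p Q) * Nat.card (pTorsion p P)) * Nat.card (pTorsion p S) :=
          Nat.mul_le_mul h2 h1
  -- convert to ranks
  rw [card_pTorsion_eq_pow hp hPfin, card_pTorsion_eq_pow hp hQfin,
    card_pTorsion_eq_pow hp hRfin] at dir1
  rw [card_pTorsion_eq_pow hp hPfin, card_pTorsion_eq_pow hp hQfin,
    card_pTorsion_eq_pow hp hRfin, card_pTorsion_eq_pow hp hSfin] at dir2
  rw [← pow_add, ← pow_add] at dir1 dir2
  have hlt : 1 < p := hp.one_lt
  have r1 : pRank p Q ≤ pRank p P + pRank p P + pRank p R :=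
    (pow_le_pow_iff_right₀ hlt).mp dir1
  have r2 : pRank p R ≤ pRank p Q + pRank p P + pRank p S :=
    (pow_le_pow_iff_right₀ hlt).mp dir2
  rw [abs_sub_le_iff]
  constructor <;> [skip; skip] <;> omega
end

section
/- Let p and q be distinct prime numbers. For each n ≥ 0, let G_n be a p-primary torsion abelian group of finite p-rank, and suppose given homomorphisms f_n : G_n → G_{n+1} and g_n : G_{n+1} → G_n such that g_n ∘ f_n equals multiplication by q^{a_n} on G_n for some integer a_n ≥ 0. If there exists N ≥ 0 such that r_p(G_n) = r_p(G_N) for all n ≥ N, then there exists N' ≥ N such that f_n : G_n → G_{n+1} is an isomorphism for all n ≥ N'. -/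
/-- In a `p`-primary group, multiplication by a power of a different prime `q` is bijective. -/
theorem qsmul_bijective {G : Type*} [AddCommGroup G] (p q a : ℕ)
    (hp : p.Prime) (hq : q.Prime) (hpq : p ≠ q)
    (htors : ∀ x : G, ∃ k : ℕ, p ^ k • x = 0) :
    Function.Bijective (fun x : G => q ^ a • x) := by
  constructor
  · intro x y hxy
    simp only at hxy
    have h0 : q ^ a • (x - y) = 0 := by rw [smul_sub, hxy, sub_self]
    obtain ⟨k, hk⟩ := htors (x - y)
    have hc : IsCoprime ((p ^ k : ℕ) : ℤ) ((q ^ a : ℕ) : ℤ) :=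
      Nat.isCoprime_iff_coprime.mpr ((((Nat.coprime_primes hp hq).mpr hpq).pow k a))
    obtain ⟨u, v, huv⟩ := hc
    have : x - y = 0 := by
      calc x - y = (1 : ℤ) • (x - y) := (one_zsmul _).symm
        _ = (u * ((p ^ k : ℕ) : ℤ) + v * ((q ^ a : ℕ) : ℤ)) • (x - y) := by rw [huv]
        _ = u • ((p ^ k : ℕ) • (x - y)) + v • ((q ^ a : ℕ) • (x - y)) := by
            rw [add_smul, mul_smul, mul_smul, natCast_zsmul, natCast_zsmul]
        _ = 0 := by rw [hk, h0, smul_zero, smul_zero, add_zero]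
    exact sub_eq_zero.mp this
  · intro y
    obtain ⟨k, hk⟩ := htors y
    have hc : IsCoprime ((q ^ a : ℕ) : ℤ) ((p ^ k : ℕ) : ℤ) :=
      Nat.isCoprime_iff_coprime.mpr ((((Nat.coprime_primes hq hp).mpr hpq.symm).pow a k))
    obtain ⟨u, v, huv⟩ := hc
    refine ⟨u • y, ?_⟩
    simp only
    calc q ^ a • u • y = u • ((q ^ a : ℕ) • y) := smul_comm _ _ _
      _ = (u * ((q ^ a : ℕ) : ℤ)) • y := by rw [mul_smul, natCast_zsmul]
      _ = (u * ((q ^ a : ℕ) : ℤ)) • y + v • ((p ^ k : ℕ) • y) := by rw [hk, smul_zero, add_zero]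
      _ = (u * ((q ^ a : ℕ) : ℤ) + v * ((p ^ k : ℕ) : ℤ)) • y := by
            rw [add_smul]; congr 1; rw [mul_smul, natCast_zsmul]
      _ = y := by rw [huv, one_zsmul]

theorem pTorsion_card (p : ℕ) (hp : p.Prime) (G : Type*) [AddCommGroup G]
    [Finite (pTorsion p G)] : Nat.card (pTorsion p G) = p ^ pRank p G := by
  haveI := Fact.mk hp
  letI : Module (ZMod p) (pTorsion p G) :=
    AddCommGroup.zmodModule (fun x => Subtype.ext (by simp; exact x.2))
  haveI : Fintype (pTorsion p G) := Fintype.ofFinite _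
  rw [Nat.card_eq_fintype_card, pRank]
  have := Module.card_eq_pow_finrank (K := ZMod p) (V := pTorsion p G)
  rwa [ZMod.card] at this

/-- A group whose elements are `p`-power torsion (on a subset `P` closed under `nsmul`)
with trivial `p`-torsion on `P` is trivial on `P`. -/
theorem eq_zero_of_pTorsion_trivial' {G : Type*} [AddCommGroup G] (p : ℕ)
    (P : G → Prop) (hP : ∀ (m : ℕ) (x : G), P x → P (m • x))
    (htriv : ∀ x : G, P x → p • x = 0 → x = 0) :
    ∀ (k : ℕ) (x : G), P x → p ^ k • x = 0 → x = 0 := by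
  intro k
  induction k with
  | zero => intro x _ hk; simpa using hk
  | succ k ih =>
    intro x hx hk
    have h1 : p • (p ^ k • x) = 0 := by rw [← mul_smul, ← pow_succ']; exact hk
    have h2 : p ^ k • x = 0 := htriv _ (hP _ _ hx) h1
    exact ih x hx h2

/-- Let `p ≠ q` be primes and `(G_n)` a tower of `p`-primary torsion
abelian groups of finite `p`-rank with maps `f_n : G_n → G_{n+1}`, `g_n : G_{n+1} → G_n`
such that `g_n ∘ f_n` is multiplication by `q ^ a_n` on `G_n`.  If the `p`-rank of `G_n`
stabilizes for `n ≥ N`, then the maps `f_n` are isomorphisms for all large `n`. -/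
theorem eventually_bijective_of_pRank_stabilizes
    (p q : ℕ) (hp : p.Prime) (hq : q.Prime) (hpq : p ≠ q)
    (G : ℕ → Type*) [∀ n, AddCommGroup (G n)]
    (htors : ∀ n, ∀ x : G n, ∃ k : ℕ, p ^ k • x = 0)
    (hfin : ∀ n, Finite (pTorsion p (G n)))
    (f : ∀ n, G n →+ G (n + 1)) (g : ∀ n, G (n + 1) →+ G n)
    (a : ℕ → ℕ) (hgf : ∀ n, ∀ x : G n, g n (f n x) = q ^ a n • x)
    (N : ℕ) (hN : ∀ n ≥ N, pRank p (G n) = pRank p (G N)) :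
    ∃ N' ≥ N, ∀ n ≥ N', Function.Bijective (f n) := by
  refine ⟨N, le_refl N, fun n hn => ?_⟩
  haveI := hfin n; haveI := hfin (n + 1)
  have hbij := qsmul_bijective p q (a n) hp hq hpq (htors n)
  have hfinj : Function.Injective (f n) := by
    intro x y hxy
    apply hbij.1
    simp only
    rw [← hgf n x, ← hgf n y, hxy]
  -- the `p`-torsion of the kernel of `g n`, as a subtype
  let Kt := {z : G (n + 1) // g n z = 0 ∧ p • z = 0}
  haveI : Finite Kt := by
    apply Finite.of_injective (fun z : Kt => (⟨z.1, z.2.2⟩ : pTorsion p (G (n + 1))))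
    intro z w h
    exact Subtype.ext (congrArg (Subtype.val : pTorsion p (G (n + 1)) → G (n + 1)) h)
  haveI : Nonempty Kt := ⟨⟨0, map_zero _, smul_zero _⟩⟩
  -- the injection `(pTorsion G n) × Kt → pTorsion G (n+1)`
  have hφ : Function.Injective
      (fun xz : pTorsion p (G n) × Kt =>
        (⟨f n xz.1.1 + xz.2.1, by
          have h1 : p • (xz.1 : G n) = 0 := xz.1.2
          show p • _ = 0
          rw [smul_add, ← map_nsmul, h1, map_zero, xz.2.2.2, add_zero]⟩ :
          pTorsion p (G (n + 1)))) := by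
    rintro ⟨⟨x1, hx1⟩, ⟨z1, hz1⟩⟩ ⟨⟨x2, hx2⟩, ⟨z2, hz2⟩⟩ h
    have h' : f n x1 + z1 = f n x2 + z2 := congrArg Subtype.val h
    have hfx : f n (x1 - x2) = z2 - z1 := by
      rw [map_sub]; linear_combination (norm := abel) h'
    have hg : q ^ a n • (x1 - x2) = 0 := by
      rw [← hgf n, hfx, map_sub, hz1.1, hz2.1, sub_zero]
    have hx : x1 = x2 := by
      have := hbij.1 (a₁ := x1 - x2) (a₂ := 0) (by simpa using hg)
      exact sub_eq_zero.mp this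
    have hz : z1 = z2 := by
      subst hx
      have : f n x1 + z1 = f n x1 + z2 := h'
      exact add_left_cancel this
    simp only [Prod.mk.injEq, Subtype.mk.injEq]
    exact ⟨hx, Subtype.ext hz⟩

  -- cardinality bookkeeping
  have hcard : Nat.card (pTorsion p (G n)) * Nat.card Kt ≤ Nat.card (pTorsion p (G (n + 1))) := by
    have := Nat.card_le_card_of_injective _ hφ
    rwa [Nat.card_prod] at this
  have hceq : Nat.card (pTorsion p (G (n + 1))) = Nat.card (pTorsion p (G n)) := by
    rw [pTorsion_card p hp, pTorsion_card p hp, hN n hn, hN (n + 1) (le_trans hn (Nat.le_succ n))]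
  have hcpos : 0 < Nat.card (pTorsion p (G n)) := Nat.card_pos
  have hKt1 : Nat.card Kt ≤ 1 := by
    rw [hceq] at hcard
    nlinarith [Nat.card_pos (α := Kt)]
  haveI : Subsingleton Kt := by
    have : Nat.card Kt = 1 := le_antisymm hKt1 Nat.card_pos
    exact (Nat.card_eq_one_iff_unique.mp this).1
  -- trivial p-torsion in ker g, hence ker g is trivial
  have htriv : ∀ z : G (n + 1), g n z = 0 → p • z = 0 → z = 0 := by
    intro z hz hpz
    have : (⟨z, hz, hpz⟩ : Kt) = ⟨0, map_zero _, smul_zero _⟩ := Subsingleton.elim _ _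
    exact congrArg Subtype.val this
  have hker : ∀ z : G (n + 1), g n z = 0 → z = 0 := by
    intro z hz
    obtain ⟨k, hk⟩ := htors (n + 1) z
    exact eq_zero_of_pTorsion_trivial' p (fun w => g n w = 0)
      (fun m w hw => by show g n (m • w) = 0; have hw' : g n w = 0 := hw; rw [map_nsmul, hw', smul_zero])
      (fun w hw hpw => htriv w hw hpw) k z hz hk
  refine ⟨hfinj, fun y => ?_⟩
  obtain ⟨x, hx⟩ := hbij.2 (g n y)
  refine ⟨x, ?_⟩
  have hx' : q ^ a n • x = g n y := hx
  have hz : g n (y - f n x) = 0 := by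
    rw [map_sub, hgf n x, hx', sub_self]
  have := hker _ hz
  linear_combination (norm := abel) -this
end
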